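/- Let G be a group, let U be a normal subgroup of G, and let A be the center of U, regarded as a subgroup of G. Let H be a subgroup of G such that A·H = G (every element of G is a product of an element of A and an element of H). Then U ∩ H is a normal subgroup of G. -/
import Mathlib


/-- Let `U` be a normal subgroup of `G`, let `A` be the center of `U`
(viewed as a subgroup of `G`), and let `H ≤ G` satisfy `A·H = G`.
Then `U ⊓ H` is normal in `G`. -/
theorem inf_normal_of_center_mul_eq_top {G : Type*} [Group G]
    (U H : Subgroup G) (hU : U.Normal)
    (hAH : ∀ g : G, ∃ a ∈ Subgroup.map U.subtype (Subgroup.center U),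
      ∃ h ∈ H, g = a * h) :
    (U ⊓ H).Normal := by
  constructor
  intro x hx g
  obtain ⟨hxU, hxH⟩ := hx
  obtain ⟨a, ha, h, hh, rfl⟩ := hAH g
  obtain ⟨⟨a, haU⟩, haC, rfl⟩ := ha
  have hU1 : h * x * h⁻¹ ∈ U := hU.conj_mem x hxU h
  have h2 : (h * x * h⁻¹) * a = a * (h * x * h⁻¹) :=
    congrArg Subtype.val (Subgroup.mem_center_iff.mp haC ⟨h * x * h⁻¹, hU1⟩)
  have hcomm : (a : G) * (h * x * h⁻¹) * (a : G)⁻¹ = h * x * h⁻¹ := by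
    rw [← h2, mul_inv_cancel_right]
  have key : (U.subtype ⟨a, haU⟩ * h) * x * (U.subtype ⟨a, haU⟩ * h)⁻¹ = h * x * h⁻¹ := by
    simp only [Subgroup.coe_subtype, mul_inv_rev]
    rw [show (a : G) * h * x * (h⁻¹ * (a : G)⁻¹) = a * (h * x * h⁻¹) * (a : G)⁻¹ by group]
    exact hcomm
  rw [key]
  exact ⟨hU1, Subgroup.mul_mem _ (Subgroup.mul_mem _ hh hxH) (Subgroup.inv_mem _ hh)⟩
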